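/- Uniqueness of normal-form representatives: if f ∈ F and β ∈ Ω satisfy j f * dxᵛ = ω * β, then f = 0. Together with the existence of such representatives this identifies the cohomology of the complex (Ω, ω∧) with F, the coordinate expression of semidensities (part (1) of the Theorem in local Darboux coordinates). -/

import Mathlib

open TensorProduct ExteriorAlgebra MvPolynomial

set_option synthInstance.maxHeartbeats 1000000
set_option maxHeartbeats 1000000

noncomputable section

variable (n : ℕ)

abbrev Om (n : ℕ) := MvPolynomial (Fin n ⊕ Fin n) ℝ ⊗[ℝ] ExteriorAlgebra ℝ ((Fin n ⊕ Fin n) → ℝ)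

def xx (i : Fin n) : Om n := X (Sum.inl i) ⊗ₜ 1
def dp (i : Fin n) : Om n := X (Sum.inr i) ⊗ₜ 1
def pp (i : Fin n) : Om n := 1 ⊗ₜ ι ℝ (Pi.single (Sum.inl i) 1)
def dx (i : Fin n) : Om n := 1 ⊗ₜ ι ℝ (Pi.single (Sum.inr i) 1)

def om (n : ℕ) : Om n := ∑ i : Fin n, dp n i * dx n i

/-- The odd derivation `∂/∂p_k` of the exterior factor of `Ω`:
left contraction with the dual-basis functional of `Pi.single (Sum.inl k) 1`. -/
def dpder (k : Fin n) :
    ExteriorAlgebra ℝ ((Fin n ⊕ Fin n) → ℝ) →ₗ[ℝ] ExteriorAlgebra ℝ ((Fin n ⊕ Fin n) → ℝ) :=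
  CliffordAlgebra.contractLeft (LinearMap.proj (Sum.inl k))

/-- Left contraction `∂/∂dx_k` of the exterior factor of `Ω` with the dual-basis functional of
`Pi.single (Sum.inr k) 1`. -/
def dxder (k : Fin n) :
    ExteriorAlgebra ℝ ((Fin n ⊕ Fin n) → ℝ) →ₗ[ℝ] ExteriorAlgebra ℝ ((Fin n ⊕ Fin n) → ℝ) :=
  CliffordAlgebra.contractLeft (LinearMap.proj (Sum.inr k))

/-- The de Rham operator `d` on `Ω`. -/
def dRham (n : ℕ) : Om n →ₗ[ℝ] Om n :=
  (∑ k : Fin n, LinearMap.mulLeft ℝ (dx n k) ∘ₗ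
      TensorProduct.map (MvPolynomial.pderiv (Sum.inl k)).toLinearMap LinearMap.id) +
  (∑ k : Fin n, LinearMap.mulLeft ℝ (dp n k) ∘ₗ
      TensorProduct.map LinearMap.id (dpder n k))

/-- The homotopy operator `L` on `Ω`. -/
def hoL (n : ℕ) : Om n →ₗ[ℝ] Om n :=
  ∑ k : Fin n, TensorProduct.map LinearMap.id (dxder n k) ∘ₗ
      TensorProduct.map (MvPolynomial.pderiv (Sum.inr k)).toLinearMap LinearMap.id

/-- `α ∈ Ω` has bidegree `(a, b)`: it is an ℝ-linear combination of elements `m ⊗ w` with `m`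
a monomial of total degree `b` in the variables `X (Sum.inr i)` and `w` a product of exterior
generators exactly `a` of which are of the form `ι (Pi.single (Sum.inr i) 1)`. -/
def HasBidegree (a b : ℕ) (α : Om n) : Prop :=
  α ∈ Submodule.span ℝ
    { t : Om n | ∃ (σ : (Fin n ⊕ Fin n) →₀ ℕ) (l : List (Fin n ⊕ Fin n)),
        (∑ i : Fin n, σ (Sum.inr i)) = b ∧
        (l.countP (fun i => i.isRight)) = a ∧
        t = (MvPolynomial.monomial σ (1 : ℝ)) ⊗ₜ
              (l.map (fun i => ι ℝ (Pi.single i (1 : ℝ)))).prod }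

/-- The coefficient algebra `F`. -/
abbrev Coef (n : ℕ) := MvPolynomial (Fin n) ℝ ⊗[ℝ] ExteriorAlgebra ℝ (Fin n → ℝ)

/-- Extension by zero `(Fin n → ℝ) →ₗ ((Fin n ⊕ Fin n) → ℝ)`, sending
`Pi.single i 1` to `Pi.single (Sum.inl i) 1`. -/
def inlExt : (Fin n → ℝ) →ₗ[ℝ] ((Fin n ⊕ Fin n) → ℝ) where
  toFun v := Sum.elim v 0
  map_add' u v := by ext i; cases i <;> simp
  map_smul' c v := by ext i; cases i <;> simp

/-- The algebra embedding `j : F → Ω` induced by `Sum.inl` on polynomial variables and on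
exterior generators. -/
def jmap (n : ℕ) : Coef n →ₐ[ℝ] Om n :=
  Algebra.TensorProduct.map (MvPolynomial.rename Sum.inl)
    (ExteriorAlgebra.lift ℝ ⟨(ι ℝ).comp (inlExt n), fun _ => ι_sq_zero _⟩)

/-- The coordinate volume form `dxᵛ = dx_1 * dx_2 * ⋯ * dx_n`. -/
def dxVol (n : ℕ) : Om n := (List.ofFn (dx n)).prod

/-- The operator `∂/∂p_k` on the exterior factor of `F`. -/
def pderC (k : Fin n) :
    ExteriorAlgebra ℝ (Fin n → ℝ) →ₗ[ℝ] ExteriorAlgebra ℝ (Fin n → ℝ) :=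
  CliffordAlgebra.contractLeft (LinearMap.proj k)

/-- The Batalin–Vilkovisky operator `Δ = ∑ₖ ∂²/∂x_k∂p_k` on `F`. -/
def bv (n : ℕ) : Coef n →ₗ[ℝ] Coef n :=
  ∑ k : Fin n, TensorProduct.map (MvPolynomial.pderiv k).toLinearMap LinearMap.id ∘ₗ
      TensorProduct.map LinearMap.id (pderC n k)

/-- The element `p_1 * p_2 * ⋯ * p_n` of `F`. -/
def pVol (n : ℕ) : Coef n :=
  (List.ofFn (fun i : Fin n => (1 : MvPolynomial (Fin n) ℝ) ⊗ₜ ι ℝ (Pi.single i (1 : ℝ)))).prod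


section AuxNFU

open CliffordAlgebra (contractLeft involute contractLeft_ι_mul contractLeft_ι contractLeft_algebraMap contractLeft_algebraMap_mul contractLeft_one involute_ι)

/-- Product rule (twisted derivation property) for left contraction on an exterior algebra. -/
lemma contractLeft_mul' {M : Type*} [AddCommGroup M] [Module ℝ M] (d : Module.Dual ℝ M)
    (x y : ExteriorAlgebra ℝ M) :
    contractLeft d (x * y) =
      contractLeft d x * y + involute x * contractLeft d y := by
  induction x using CliffordAlgebra.induction generalizing y with
  | algebraMap r =>
      rw [contractLeft_algebraMap_mul, contractLeft_algebraMap, zero_mul, zero_add,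
        AlgHom.commutes, ← Algebra.smul_def]
  | ι m =>
      rw [contractLeft_ι_mul, contractLeft_ι, involute_ι, ← Algebra.smul_def, neg_mul,
        sub_eq_add_neg]
  | mul a b ha hb =>
      rw [mul_assoc, ha, hb, ha, map_mul]
      noncomm_ring
  | add a b ha hb =>
      simp only [add_mul, map_add, ha, hb, LinearMap.add_apply]
      abel

/-- The lift `F`-exterior-factor → `Ω`-exterior-factor (second component of `jmap`). -/
def liftL (n : ℕ) :
    ExteriorAlgebra ℝ (Fin n → ℝ) →ₐ[ℝ] ExteriorAlgebra ℝ ((Fin n ⊕ Fin n) → ℝ) :=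
  ExteriorAlgebra.lift ℝ ⟨(ι ℝ).comp (inlExt n), fun _ => ι_sq_zero _⟩

/-- Projection back from the big exterior algebra, killing `inr` generators. -/
def piL (n : ℕ) :
    ExteriorAlgebra ℝ ((Fin n ⊕ Fin n) → ℝ) →ₐ[ℝ] ExteriorAlgebra ℝ (Fin n → ℝ) :=
  ExteriorAlgebra.lift ℝ ⟨(ι ℝ).comp (LinearMap.funLeft ℝ ℝ Sum.inl), fun _ => ι_sq_zero _⟩

lemma liftL_ι (n : ℕ) (v : Fin n → ℝ) : liftL n (ι ℝ v) = ι ℝ (Sum.elim v 0) := by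
  simp [liftL, inlExt]

lemma piL_liftL (n : ℕ) (w : ExteriorAlgebra ℝ (Fin n → ℝ)) : piL n (liftL n w) = w := by
  have h : (piL n).comp (liftL n) = AlgHom.id ℝ _ := by
    apply ExteriorAlgebra.hom_ext
    apply LinearMap.ext
    intro v
    show piL n (liftL n (ι ℝ v)) = ι ℝ v
    rw [liftL_ι]
    simp [piL, ExteriorAlgebra.lift_ι_apply, LinearMap.funLeft]
  simpa using DFunLike.congr_fun h w

lemma involute_liftL (n : ℕ) (w : ExteriorAlgebra ℝ (Fin n → ℝ)) :
    involute (liftL n w) = liftL n (involute w) := by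
  have h : ((involute (Q := (0 : QuadraticForm ℝ ((Fin n ⊕ Fin n) → ℝ)))).comp (liftL n)) = (liftL n).comp (involute (Q := (0 : QuadraticForm ℝ (Fin n → ℝ)))) := by
    apply ExteriorAlgebra.hom_ext
    apply LinearMap.ext
    intro v
    show involute (liftL n (ι ℝ v)) = liftL n (involute (ι ℝ v))
    rw [liftL_ι, involute_ι, involute_ι, map_neg, liftL_ι]
  simpa using DFunLike.congr_fun h w

lemma contract_liftL_zero (n : ℕ) (d : Module.Dual ℝ ((Fin n ⊕ Fin n) → ℝ))
    (hd : ∀ v : Fin n → ℝ, d (Sum.elim v 0) = 0) (w : ExteriorAlgebra ℝ (Fin n → ℝ)) :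
    contractLeft d (liftL n w) = 0 := by
  induction w using CliffordAlgebra.induction with
  | algebraMap r => rw [AlgHom.commutes, contractLeft_algebraMap]
  | ι m => rw [liftL_ι, contractLeft_ι, hd, map_zero]
  | mul a b ha hb => rw [map_mul, contractLeft_mul', ha, hb, zero_mul, mul_zero, add_zero]
  | add a b ha hb => rw [map_add, map_add, ha, hb, add_zero]

/-- Exterior monomial in the `dx` generators indexed by a list. -/
def dxE (n : ℕ) (L : List (Fin n)) : ExteriorAlgebra ℝ ((Fin n ⊕ Fin n) → ℝ) :=
  (L.map fun k => ι ℝ (Pi.single (Sum.inr k) (1 : ℝ))).prod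

lemma contract_dxE_zero (n : ℕ) (j : Fin n) (L : List (Fin n)) (hj : j ∉ L) :
    contractLeft (LinearMap.proj (R := ℝ) (φ := fun _ : Fin n ⊕ Fin n => ℝ) (Sum.inr j))
      (dxE n L) = 0 := by
  induction L with
  | nil => simp [dxE, contractLeft_one]
  | cons k L ih =>
      have hk : k ≠ j := fun h => hj (h ▸ (List.mem_cons_self : k ∈ k :: L))
      have hL : j ∉ L := fun h => hj (List.mem_cons_of_mem _ h)
      have : dxE n (k :: L) = ι ℝ (Pi.single (Sum.inr k) (1 : ℝ)) * dxE n L := by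
        simp [dxE]
      rw [this, contractLeft_ι_mul, ih hL, mul_zero, sub_zero, LinearMap.proj_apply,
        Pi.single_eq_of_ne (by simp [Ne.symm hk]) _, zero_smul]

lemma involute_dxE (n : ℕ) (L : List (Fin n)) :
    involute (dxE n L) = ((-1 : ℝ) ^ L.length) • dxE n L := by
  induction L with
  | nil => simp [dxE]
  | cons k L ih =>
      have : dxE n (k :: L) = ι ℝ (Pi.single (Sum.inr k) (1 : ℝ)) * dxE n L := by
        simp [dxE]
      rw [this, map_mul, involute_ι, ih, List.length_cons, pow_succ]
      rw [neg_mul, mul_smul_comm, mul_neg_one, neg_smul]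

/-- Iterated contraction operator, contracting with the last index of the list first. -/
def contrL (n : ℕ) (L : List (Fin n)) :
    ExteriorAlgebra ℝ ((Fin n ⊕ Fin n) → ℝ) →ₗ[ℝ] ExteriorAlgebra ℝ ((Fin n ⊕ Fin n) → ℝ) :=
  L.foldl (fun f k => f ∘ₗ
    contractLeft (LinearMap.proj (R := ℝ) (φ := fun _ : Fin n ⊕ Fin n => ℝ) (Sum.inr k)))
    LinearMap.id

/-- `involute` as a linear endomorphism of the small exterior algebra. -/
def invS (n : ℕ) : Module.End ℝ (ExteriorAlgebra ℝ (Fin n → ℝ)) :=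
  (involute (Q := (0 : QuadraticForm ℝ (Fin n → ℝ)))).toLinearMap

lemma key_contr (n : ℕ) (L : List (Fin n)) (hL : L.Nodup) :
    ∃ s : ℝ, (s = 1 ∨ s = -1) ∧ ∀ w : ExteriorAlgebra ℝ (Fin n → ℝ),
      contrL n L (liftL n w * dxE n L) = s • liftL n ((invS n ^ L.length) w) := by
  induction L using List.reverseRecOn with
  | nil =>
      refine ⟨1, Or.inl rfl, fun w => ?_⟩
      simp [contrL, dxE, invS]
  | append_singleton L j ih =>
      have hL' : L.Nodup := hL.of_append_left
      have hjL : j ∉ L := fun hm =>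
        (List.disjoint_of_nodup_append hL) hm (by simp)
      obtain ⟨s, hs, hkey⟩ := ih hL'
      refine ⟨(-1 : ℝ) ^ L.length * s, ?_, fun w => ?_⟩
      · rcases Nat.even_or_odd L.length with he | ho
        · rw [he.neg_one_pow]; rcases hs with h | h <;> simp [h]
        · rw [ho.neg_one_pow]; rcases hs with h | h <;> simp [h]
      · have hsplit : dxE n (L ++ [j]) = dxE n L * ι ℝ (Pi.single (Sum.inr j) (1 : ℝ)) := by
          simp [dxE]
        have hcontr : contrL n (L ++ [j]) = contrL n L ∘ₗ
            contractLeft (LinearMap.proj (R := ℝ)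
              (φ := fun _ : Fin n ⊕ Fin n => ℝ) (Sum.inr j)) := by
          simp [contrL, List.foldl_append]
        set d := LinearMap.proj (R := ℝ) (φ := fun _ : Fin n ⊕ Fin n => ℝ) (Sum.inr j) with hd
        have hstep : contractLeft d (liftL n w * dxE n (L ++ [j])) =
            ((-1 : ℝ) ^ L.length) • (liftL n (involute w) * dxE n L) := by
          rw [hsplit, ← mul_assoc, contractLeft_mul' d (liftL n w * dxE n L), contractLeft_mul',
            contract_liftL_zero n d (fun v => rfl) w, contract_dxE_zero n j L hjL,
            zero_mul, mul_zero, add_zero, zero_mul, zero_add, contractLeft_ι]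
          have : d (Pi.single (Sum.inr j) (1 : ℝ)) = 1 := by simp [hd]
          rw [this, map_one, mul_one, map_mul, involute_liftL, involute_dxE, mul_smul_comm]
        rw [hcontr, LinearMap.comp_apply, hstep, map_smul, hkey, smul_smul,
          List.length_append, List.length_singleton, pow_succ, Module.End.mul_apply]
        rfl

end AuxNFU


section AuxNFU2

open CliffordAlgebra (contractLeft involute)

/-- Evaluation of the polynomial factor killing the `dp` variables. -/
def Amap (n : ℕ) : MvPolynomial (Fin n ⊕ Fin n) ℝ →ₐ[ℝ] MvPolynomial (Fin n) ℝ :=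
  aeval (Sum.elim X 0)

/-- The extraction operator `Φ : Ω → F`. -/
def Phi (n : ℕ) : Om n →ₗ[ℝ] Coef n :=
  TensorProduct.map (Amap n).toLinearMap
    ((piL n).toLinearMap ∘ₗ contrL n (List.finRange n))

lemma Phi_dp_mul (n : ℕ) (k : Fin n) (t : Om n) : Phi n (dp n k * t) = 0 := by
  have h : Phi n ∘ₗ LinearMap.mulLeft ℝ (dp n k) = 0 := by
    apply TensorProduct.ext'
    intro q w
    simp only [LinearMap.comp_apply, LinearMap.mulLeft_apply, LinearMap.zero_apply]
    have hmul : dp n k * (q ⊗ₜ[ℝ] w) = (X (Sum.inr k) * q) ⊗ₜ[ℝ] w := by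
      simp [dp, Algebra.TensorProduct.tmul_mul_tmul]
    rw [hmul]
    simp only [Phi, TensorProduct.map_tmul, AlgHom.toLinearMap_apply, map_mul]
    have hA : Amap n (X (Sum.inr k) : MvPolynomial (Fin n ⊕ Fin n) ℝ) = 0 := by
      simp [Amap]
    rw [hA, zero_mul, TensorProduct.zero_tmul]
  simpa using DFunLike.congr_fun h t

lemma Phi_om_mul (n : ℕ) (β : Om n) : Phi n (om n * β) = 0 := by
  rw [om, Finset.sum_mul, map_sum]
  refine Finset.sum_eq_zero fun k _ => ?_
  rw [mul_assoc]
  exact Phi_dp_mul n k _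

lemma dxVol_eq (n : ℕ) :
    dxVol n = (1 : MvPolynomial (Fin n ⊕ Fin n) ℝ) ⊗ₜ[ℝ] dxE n (List.finRange n) := by
  rw [dxVol, List.ofFn_eq_map]
  rw [show List.map (dx n) (List.finRange n) =
      List.map (Algebra.TensorProduct.includeRight (R := ℝ)
        (A := MvPolynomial (Fin n ⊕ Fin n) ℝ))
      (List.map (fun k => ι ℝ (Pi.single (Sum.inr k) (1 : ℝ))) (List.finRange n)) from by
    rw [List.map_map]; rfl]
  rw [← map_list_prod]
  rfl

lemma Phi_jmap (n : ℕ) : ∃ s : ℝ, (s = 1 ∨ s = -1) ∧ ∀ f : Coef n,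
    Phi n (jmap n f * dxVol n) = s • TensorProduct.map LinearMap.id (invS n ^ n) f := by
  obtain ⟨s, hs, hkey⟩ := key_contr n (List.finRange n) (List.nodup_finRange n)
  refine ⟨s, hs, fun f => ?_⟩
  have h : (Phi n ∘ₗ LinearMap.mulRight ℝ (dxVol n) ∘ₗ (jmap n).toLinearMap)
      = s • TensorProduct.map LinearMap.id (invS n ^ n) := by
    apply TensorProduct.ext'
    intro q w
    simp only [LinearMap.comp_apply, AlgHom.toLinearMap_apply, LinearMap.mulRight_apply,
      LinearMap.smul_apply]
    have hj : jmap n (q ⊗ₜ[ℝ] w) = (rename Sum.inl q) ⊗ₜ[ℝ] liftL n w := rfl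
    rw [hj, dxVol_eq, Algebra.TensorProduct.tmul_mul_tmul, mul_one]
    simp only [Phi, TensorProduct.map_tmul, LinearMap.comp_apply, AlgHom.toLinearMap_apply]
    rw [hkey w]
    have hA : Amap n (rename Sum.inl q) = q := by
      rw [Amap, aeval_rename]
      have hcomp : (Sum.elim X (0 : Fin n → MvPolynomial (Fin n) ℝ)) ∘ Sum.inl
          = (X : Fin n → MvPolynomial (Fin n) ℝ) := rfl
      rw [hcomp, aeval_X_left_apply]
    rw [hA, map_smul, piL_liftL, List.length_finRange]
    simp [TensorProduct.tmul_smul]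
  simpa using DFunLike.congr_fun h f

end AuxNFU2

/-- Uniqueness of normal-form representatives: if `f ∈ F` and `β ∈ Ω` satisfy
`j f * dxᵛ = ω * β`, then `f = 0`. -/
theorem normal_form_unique (n : ℕ) (hn : 1 ≤ n) (f : Coef n) (β : Om n)
    (h : jmap n f * dxVol n = om n * β) :
    f = 0 := by
  obtain ⟨s, hs, hPhi⟩ := Phi_jmap n
  have h0 : s • TensorProduct.map LinearMap.id (invS n ^ n) f = 0 := by
    rw [← hPhi f, h, Phi_om_mul]
  have hs0 : s ≠ 0 := by rcases hs with h' | h' <;> simp [h']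
  have hG : TensorProduct.map LinearMap.id (invS n ^ n) f = 0 :=
    (smul_eq_zero.mp h0).resolve_left hs0
  have hpow : invS n ^ n * invS n ^ n = 1 := by
    have h2 : invS n * invS n = 1 := by
      apply LinearMap.ext; intro x
      exact CliffordAlgebra.involute_involute x
    rw [← (Commute.refl (invS n)).mul_pow, h2, one_pow]
  have hinv' : (invS n ^ n) ∘ₗ (invS n ^ n) = LinearMap.id := by
    rw [← Module.End.mul_eq_comp, hpow]; rfl
  have hfid : TensorProduct.map LinearMap.id (invS n ^ n) ∘ₗ
      TensorProduct.map LinearMap.id (invS n ^ n)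
      = (LinearMap.id : Coef n →ₗ[ℝ] Coef n) := by
    rw [← TensorProduct.map_comp, LinearMap.id_comp, hinv', TensorProduct.map_id]
  have hff := DFunLike.congr_fun hfid f
  simp only [LinearMap.comp_apply, LinearMap.id_apply] at hff
  rw [hG, map_zero] at hff
  exact hff.symm
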